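/- Stability of the explicit Euler scheme below the CFL threshold: if Δt > 0 and Δt · c_n < 2, then for every (n+1)×(n+1) complex matrix ρ₀ there exist an (n+1)×(n+1) matrix ρ∞ whose (k,m) entry vanishes unless both k < l and m < l, and constants C ≥ 0 and r ∈ [0,1), such that ‖E^p(ρ₀) − ρ∞‖ ≤ C·r^p for all p ∈ ℕ (Frobenius norm); in particular the iterates E^p(ρ₀) converge to ρ∞ at a geometric rate. -/

import Mathlib

open Matrix

/-- The truncated annihilation matrix on `ℂ^{n+1}`: `a e_k = √k e_{k-1}`. -/
noncomputable def ann (n : ℕ) : Matrix (Fin (n+1)) (Fin (n+1)) ℂ :=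
  Matrix.of fun i j => if (i : ℕ) + 1 = (j : ℕ) then ((Real.sqrt (j : ℕ) : ℝ) : ℂ) else 0

/-- The descending factorial `c_k = k(k-1)⋯(k-l+1)` as a real number. -/
noncomputable def cfac (l k : ℕ) : ℝ := (Nat.descFactorial k l : ℝ)

/-- The explicit Euler scheme for the `l`-photon loss Lindbladian,
`E(ρ) = ρ + Δt (L ρ Lᴴ − ½(LᴴL ρ + ρ LᴴL))` with `L = a^l`. -/
noncomputable def euler (n l : ℕ) (Δt : ℝ)
    (ρ : Matrix (Fin (n+1)) (Fin (n+1)) ℂ) : Matrix (Fin (n+1)) (Fin (n+1)) ℂ :=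
  ρ + (Δt : ℂ) • ((ann n ^ l) * ρ * (ann n ^ l)ᴴ
      - (2⁻¹ : ℂ) • ((ann n ^ l)ᴴ * (ann n ^ l) * ρ + ρ * ((ann n ^ l)ᴴ * (ann n ^ l))))

/-- The Frobenius norm of a complex matrix. -/
noncomputable def frobNorm {m : ℕ} (A : Matrix (Fin m) (Fin m) ℂ) : ℝ :=
  Real.sqrt (∑ i, ∑ j, ‖A i j‖ ^ 2)

lemma ann_pow_apply (n l : ℕ) (i j : Fin (n+1)) :
    (ann n ^ l) i j =
      if (i : ℕ) + l = (j : ℕ) then ((Real.sqrt (Nat.descFactorial (j : ℕ) l) : ℝ) : ℂ) else 0 := by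
  induction l generalizing i j with
  | zero =>
      simp [Matrix.one_apply, Fin.ext_iff]
  | succ l ih =>
      rw [pow_succ, Matrix.mul_apply]
      simp only [ih]
      simp only [ann, Matrix.of_apply, ite_mul, mul_ite, zero_mul, mul_zero]
      by_cases h : (i : ℕ) + (l + 1) = (j : ℕ)
      · have hjn : (i : ℕ) + l < n + 1 := by omega
        rw [if_pos h, Finset.sum_eq_single (⟨(i : ℕ) + l, hjn⟩ : Fin (n+1))]
        · have hc : ((⟨(i : ℕ) + l, hjn⟩ : Fin (n+1)) : ℕ) = (i : ℕ) + l := rfl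
          rw [if_pos hc.symm, if_pos (by omega : ((⟨(i : ℕ) + l, hjn⟩ : Fin (n+1)) : ℕ) + 1 = (j : ℕ))]
          have hj : (j : ℕ) = ((i : ℕ) + l) + 1 := by omega
          rw [hc, hj, Nat.succ_descFactorial_succ]
          push_cast
          rw [Real.sqrt_mul (by positivity), Complex.ofReal_mul]
          ring
        · intro b _ hb
          have hc : ((⟨(i : ℕ) + l, hjn⟩ : Fin (n+1)) : ℕ) = (i : ℕ) + l := rfl
          rw [if_neg]
          intro hb'
          exact hb (Fin.ext (by omega))
        · intro h'; exact absurd (Finset.mem_univ _) h'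
      · rw [if_neg h]
        apply Finset.sum_eq_zero
        intro t _
        by_cases h1 : (i : ℕ) + l = (t : ℕ)
        · rw [if_pos h1, if_neg (by omega)]
        · rw [if_neg h1]; simp

lemma gram_eq (n l : ℕ) :
    (ann n ^ l)ᴴ * (ann n ^ l) = Matrix.diagonal (fun i : Fin (n+1) => ((cfac l (i : ℕ) : ℝ) : ℂ)) := by
  ext i j
  rw [Matrix.mul_apply]
  simp only [Matrix.conjTranspose_apply, ann_pow_apply, Matrix.diagonal_apply]
  by_cases hij : i = j
  · subst hij
    simp only [if_pos rfl]
    by_cases hli : l ≤ (i : ℕ)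
    · have hlt : (i : ℕ) - l < n + 1 := by omega
      rw [Finset.sum_eq_single (⟨(i : ℕ) - l, hlt⟩ : Fin (n+1))]
      · have hc : ((⟨(i : ℕ) - l, hlt⟩ : Fin (n+1)) : ℕ) + l = (i : ℕ) := by
          simp only [Fin.val_mk]; omega
        rw [if_pos hc]
        simp only [Complex.star_def, Complex.conj_ofReal, if_true]
        rw [← Complex.ofReal_mul, Real.mul_self_sqrt (by positivity)]
        rfl
      · intro b _ hb
        have hc : ((⟨(i : ℕ) - l, hlt⟩ : Fin (n+1)) : ℕ) = (i : ℕ) - l := rfl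
        rw [if_neg]
        · simp
        · intro hb'
          exact hb (Fin.ext (by omega))
      · intro h'; exact absurd (Finset.mem_univ _) h'
    · have hz : cfac l (i : ℕ) = 0 := by
        have : (i : ℕ) < l := by omega
        simp [cfac, Nat.descFactorial_eq_zero_iff_lt.2 this]
      rw [hz]
      rw [Finset.sum_eq_zero]
      · simp
      · intro t _
        rw [if_neg (show ¬((t : ℕ) + l = (i : ℕ)) by omega)]
        simp
  · rw [if_neg hij, Finset.sum_eq_zero]
    intro t _
    by_cases h1 : (t : ℕ) + l = (i : ℕ)
    · rw [if_pos h1, if_neg (by rw [Fin.ext_iff] at hij; omega)]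
      simp
    · rw [if_neg h1]; simp

lemma mulL_apply (n l : ℕ) (ρ : Matrix (Fin (n+1)) (Fin (n+1)) ℂ) (k t : Fin (n+1)) :
    ((ann n ^ l) * ρ) k t =
      if h : (k : ℕ) + l ≤ n then
        ((Real.sqrt (cfac l ((k : ℕ) + l)) : ℝ) : ℂ) * ρ ⟨(k : ℕ) + l, by omega⟩ t
      else 0 := by
  rw [Matrix.mul_apply]
  simp only [ann_pow_apply]
  by_cases h : (k : ℕ) + l ≤ n
  · rw [dif_pos h, Finset.sum_eq_single (⟨(k : ℕ) + l, by omega⟩ : Fin (n+1))]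
    · rw [if_pos rfl]; rfl
    · intro b _ hb
      have hc : ((⟨(k : ℕ) + l, by omega⟩ : Fin (n+1)) : ℕ) = (k : ℕ) + l := rfl
      rw [if_neg, zero_mul]
      intro hb'; exact hb (Fin.ext (by omega))
    · intro h'; exact absurd (Finset.mem_univ _) h'
  · rw [dif_neg h, Finset.sum_eq_zero]
    intro t' _
    rw [if_neg (by omega), zero_mul]

lemma mulLH_apply (n l : ℕ) (ρ : Matrix (Fin (n+1)) (Fin (n+1)) ℂ) (k m : Fin (n+1)) :
    (ρ * (ann n ^ l)ᴴ) k m =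
      if h : (m : ℕ) + l ≤ n then
        ((Real.sqrt (cfac l ((m : ℕ) + l)) : ℝ) : ℂ) * ρ k ⟨(m : ℕ) + l, by omega⟩
      else 0 := by
  rw [Matrix.mul_apply]
  simp only [Matrix.conjTranspose_apply, ann_pow_apply]
  by_cases h : (m : ℕ) + l ≤ n
  · rw [dif_pos h, Finset.sum_eq_single (⟨(m : ℕ) + l, by omega⟩ : Fin (n+1))]
    · rw [if_pos rfl]
      simp only [Complex.star_def, Complex.conj_ofReal]
      rw [mul_comm]; rfl
    · intro b _ hb
      have hc : ((⟨(m : ℕ) + l, by omega⟩ : Fin (n+1)) : ℕ) = (m : ℕ) + l := rfl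
      rw [if_neg, star_zero, mul_zero]
      intro hb'; exact hb (Fin.ext (by omega))
    · intro h'; exact absurd (Finset.mem_univ _) h'
  · rw [dif_neg h, Finset.sum_eq_zero]
    intro t' _
    rw [if_neg (by omega), star_zero, mul_zero]

noncomputable def lam (l : ℕ) (Δt : ℝ) (k m : ℕ) : ℝ :=
  1 - Δt * ((cfac l k + cfac l m) / 2)

noncomputable def mu (l : ℕ) (Δt : ℝ) (k m : ℕ) : ℝ :=
  Δt * (Real.sqrt (cfac l (k + l)) * Real.sqrt (cfac l (m + l)))

noncomputable def fEnt (n l : ℕ) (Δt : ℝ) (ρ₀ : Matrix (Fin (n+1)) (Fin (n+1)) ℂ)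
    (p k m : ℕ) : ℂ :=
  if h : k ≤ n ∧ m ≤ n then ((euler n l Δt)^[p] ρ₀) ⟨k, by omega⟩ ⟨m, by omega⟩ else 0

lemma euler_apply (n l : ℕ) (Δt : ℝ) (ρ : Matrix (Fin (n+1)) (Fin (n+1)) ℂ)
    (k m : Fin (n+1)) :
    (euler n l Δt ρ) k m = ((lam l Δt (k : ℕ) (m : ℕ) : ℝ) : ℂ) * ρ k m +
      (if h : (k : ℕ) + l ≤ n ∧ (m : ℕ) + l ≤ n then
        ((mu l Δt (k : ℕ) (m : ℕ) : ℝ) : ℂ) * ρ ⟨(k : ℕ) + l, by omega⟩ ⟨(m : ℕ) + l, by omega⟩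
      else 0) := by
  have hLL : ((ann n ^ l) * ρ * (ann n ^ l)ᴴ) k m =
      if h : (k : ℕ) + l ≤ n ∧ (m : ℕ) + l ≤ n then
        ((Real.sqrt (cfac l ((k : ℕ) + l)) * Real.sqrt (cfac l ((m : ℕ) + l)) : ℝ) : ℂ)
          * ρ ⟨(k : ℕ) + l, by omega⟩ ⟨(m : ℕ) + l, by omega⟩
      else 0 := by
    rw [mulLH_apply n l ((ann n ^ l) * ρ) k m]
    by_cases hm : (m : ℕ) + l ≤ n
    · rw [dif_pos hm, mulL_apply]
      by_cases hk : (k : ℕ) + l ≤ n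
      · rw [dif_pos hk, dif_pos ⟨hk, hm⟩]
        push_cast
        ring
      · rw [dif_neg hk, dif_neg (by tauto), mul_zero]
    · rw [dif_neg hm, dif_neg (by tauto)]
  rw [euler]
  simp only [Matrix.add_apply, Matrix.smul_apply, Matrix.sub_apply, Matrix.smul_apply,
    Matrix.add_apply, gram_eq, Matrix.diagonal_mul, Matrix.mul_diagonal, hLL, smul_eq_mul]
  by_cases h : (k : ℕ) + l ≤ n ∧ (m : ℕ) + l ≤ n
  · rw [dif_pos h, dif_pos h, lam, mu]
    push_cast
    ring
  · rw [dif_neg h, dif_neg h, lam]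
    push_cast
    ring

lemma fEnt_rec (n l : ℕ) (Δt : ℝ) (ρ₀ : Matrix (Fin (n+1)) (Fin (n+1)) ℂ)
    (p k m : ℕ) (hk : k ≤ n) (hm : m ≤ n) :
    fEnt n l Δt ρ₀ (p+1) k m = ((lam l Δt k m : ℝ) : ℂ) * fEnt n l Δt ρ₀ p k m +
      ((mu l Δt k m : ℝ) : ℂ) * fEnt n l Δt ρ₀ p (k + l) (m + l) := by
  rw [fEnt, dif_pos ⟨hk, hm⟩, Function.iterate_succ_apply', euler_apply]
  congr 1
  · rw [fEnt, dif_pos ⟨hk, hm⟩]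
  · by_cases h : k + l ≤ n ∧ m + l ≤ n
    · rw [dif_pos (by exact h), fEnt, dif_pos h]
    · rw [dif_neg (by exact h), fEnt, dif_neg h, mul_zero]

set_option maxHeartbeats 1000000 in
/-- Stability of the explicit Euler scheme below the CFL threshold: if `Δt c_n < 2`, every
initial matrix `ρ₀` gives iterates converging at a geometric rate to a limit `ρ∞` supported on
the indices `< l`. -/
theorem stmt2 (l n : ℕ) (hl : 1 ≤ l) (hn : l ≤ n) (Δt : ℝ) (hΔt : 0 < Δt)
    (hCFL : Δt * cfac l n < 2)
    (ρ₀ : Matrix (Fin (n+1)) (Fin (n+1)) ℂ) :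
    ∃ ρ' : Matrix (Fin (n+1)) (Fin (n+1)) ℂ,
      (∀ k m : Fin (n+1), (l ≤ (k : ℕ) ∨ l ≤ (m : ℕ)) → ρ' k m = 0) ∧
      ∃ C : ℝ, 0 ≤ C ∧ ∃ r : ℝ, 0 ≤ r ∧ r < 1 ∧
        ∀ p : ℕ, frobNorm ((euler n l Δt)^[p] ρ₀ - ρ') ≤ C * r ^ p := by
  set f := fEnt n l Δt ρ₀ with hf
  -- basic facts about cfac
  have hcmono : ∀ {a b : ℕ}, a ≤ b → cfac l a ≤ cfac l b := by
    intro a b hab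
    exact_mod_cast Nat.cast_le.2 (Nat.descFactorial_le l hab)
  have hcnonneg : ∀ a : ℕ, 0 ≤ cfac l a := fun a => by
    rw [cfac]; positivity
  have hcl : 0 < cfac l l := by
    have : l.descFactorial l ≠ 0 := by
      rw [Ne, Nat.descFactorial_eq_zero_iff_lt]; omega
    have h2 : 0 < l.descFactorial l := Nat.pos_of_ne_zero this
    rw [cfac]; exact_mod_cast h2
  have hcln : cfac l l ≤ cfac l n := hcmono hn
  -- constants
  set δ : ℝ := min (Δt * cfac l l / 2) (2 - Δt * cfac l n) with hδdef
  have hδ0 : 0 < δ := by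
    apply lt_min
    · positivity
    · linarith
  have hδ1 : δ < 1 := by
    have h1 : δ ≤ Δt * cfac l l / 2 := min_le_left _ _
    nlinarith
  set μb : ℝ := Δt * cfac l (n + l) + 1 with hμbdef
  have hμb0 : 0 < μb := by
    have := hcnonneg (n + l); nlinarith
  have hmu_nonneg : ∀ k m : ℕ, 0 ≤ mu l Δt k m := by
    intro k m; rw [mu]; positivity
  have hmu_le : ∀ k m : ℕ, k ≤ n → m ≤ n → mu l Δt k m ≤ μb := by
    intro k m hk hm
    rw [mu, hμbdef]
    have h1 : Real.sqrt (cfac l (k + l)) ≤ Real.sqrt (cfac l (n + l)) :=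
      Real.sqrt_le_sqrt (hcmono (by omega))
    have h2 : Real.sqrt (cfac l (m + l)) ≤ Real.sqrt (cfac l (n + l)) :=
      Real.sqrt_le_sqrt (hcmono (by omega))
    have h3 : Real.sqrt (cfac l (k + l)) * Real.sqrt (cfac l (m + l)) ≤ cfac l (n + l) := by
      calc Real.sqrt (cfac l (k + l)) * Real.sqrt (cfac l (m + l))
          ≤ Real.sqrt (cfac l (n + l)) * Real.sqrt (cfac l (n + l)) := by
            apply mul_le_mul h1 h2 (Real.sqrt_nonneg _) (Real.sqrt_nonneg _)
        _ = cfac l (n + l) := Real.mul_self_sqrt (hcnonneg _)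
    nlinarith
  set ε : ℝ := min 1 (δ / (2 * μb)) with hεdef
  have hε0 : 0 < ε := lt_min one_pos (by positivity)
  have hε1 : ε ≤ 1 := min_le_left _ _
  set r : ℝ := 1 - δ / 2 with hrdef
  have hr0 : 0 ≤ r := by rw [hrdef]; linarith
  have hr1 : r < 1 := by rw [hrdef]; linarith
  have hεpow : μb * ε ^ (2 * l) ≤ δ / 2 := by
    have h1 : ε ^ (2 * l) ≤ ε ^ 1 := pow_le_pow_of_le_one hε0.le hε1 (by omega)
    have h2 : ε ≤ δ / (2 * μb) := min_le_right _ _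
    rw [pow_one] at h1
    calc μb * ε ^ (2 * l) ≤ μb * (δ / (2 * μb)) := by
          apply mul_le_mul_of_nonneg_left (le_trans h1 h2) hμb0.le
      _ = δ / 2 := by field_simp
  -- bound on lam for active indices
  have hlam_le : ∀ k m : ℕ, k ≤ n → m ≤ n → (l ≤ k ∨ l ≤ m) →
      |lam l Δt k m| ≤ 1 - δ := by
    intro k m hk hm hact
    rw [lam]
    have hsum_lb : cfac l l ≤ cfac l k + cfac l m := by
      rcases hact with h | h
      · have := hcmono h; have := hcnonneg m; linarith
      · have := hcmono h; have := hcnonneg k; linarith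
    have hsum_ub : cfac l k + cfac l m ≤ 2 * cfac l n := by
      have := hcmono hk; have := hcmono hm; linarith
    have hδle1 : δ ≤ Δt * cfac l l / 2 := min_le_left _ _
    have hδle2 : δ ≤ 2 - Δt * cfac l n := min_le_right _ _
    rw [abs_le]
    constructor
    · nlinarith
    · nlinarith
  -- initial bound
  set M₀ : ℝ := ∑ i : Fin (n+1), ∑ j : Fin (n+1), ‖ρ₀ i j‖ with hM₀def
  have hM₀nonneg : 0 ≤ M₀ := by
    apply Finset.sum_nonneg; intro i _
    apply Finset.sum_nonneg; intro j _
    exact norm_nonneg _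
  have hM₀ : ∀ i j : Fin (n+1), ‖ρ₀ i j‖ ≤ M₀ := by
    intro i j
    calc ‖ρ₀ i j‖ ≤ ∑ j' : Fin (n+1), ‖ρ₀ i j'‖ :=
          Finset.single_le_sum (f := fun j' => ‖ρ₀ i j'‖)
            (fun j' _ => norm_nonneg _) (Finset.mem_univ j)
      _ ≤ M₀ := Finset.single_le_sum
          (f := fun i' => ∑ j' : Fin (n+1), ‖ρ₀ i' j'‖)
          (fun i' _ => Finset.sum_nonneg fun j' _ => norm_nonneg _) (Finset.mem_univ i)
  set B : ℝ := M₀ / ε ^ (2 * n) with hBdef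
  have hB0 : 0 ≤ B := div_nonneg hM₀nonneg (by positivity)
  -- main estimate on active entries
  have hEst : ∀ p k m : ℕ, (l ≤ k ∨ l ≤ m) →
      ‖f p k m‖ ≤ B * r ^ p * ε ^ (k + m) := by
    intro p
    induction p with
    | zero =>
        intro k m _
        by_cases h : k ≤ n ∧ m ≤ n
        · rw [hf, fEnt, dif_pos h]
          simp only [Function.iterate_zero, id_eq]
          calc ‖ρ₀ _ _‖ ≤ M₀ := hM₀ _ _
            _ = B * ε ^ (2 * n) := by rw [hBdef]; field_simp
            _ ≤ B * ε ^ (k + m) := by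
                apply mul_le_mul_of_nonneg_left _ hB0
                exact pow_le_pow_of_le_one hε0.le hε1 (by omega)
            _ = B * r ^ 0 * ε ^ (k + m) := by ring
        · rw [hf, fEnt, dif_neg h]
          simp only [norm_zero]
          exact mul_nonneg (mul_nonneg hB0 (pow_nonneg hr0 _)) (pow_nonneg hε0.le _)
    | succ p ih =>
        intro k m hact
        by_cases h : k ≤ n ∧ m ≤ n
        · rw [hf, fEnt_rec n l Δt ρ₀ p k m h.1 h.2]
          have h1 : ‖((lam l Δt k m : ℝ) : ℂ) * f p k m +
              ((mu l Δt k m : ℝ) : ℂ) * f p (k + l) (m + l)‖ ≤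
              |lam l Δt k m| * ‖f p k m‖ +
              mu l Δt k m * ‖f p (k + l) (m + l)‖ := by
            calc ‖_‖ ≤ ‖((lam l Δt k m : ℝ) : ℂ) * f p k m‖ +
                ‖((mu l Δt k m : ℝ) : ℂ) * f p (k + l) (m + l)‖ :=
                  norm_add_le _ _
              _ = |lam l Δt k m| * ‖f p k m‖ +
                  |mu l Δt k m| * ‖f p (k + l) (m + l)‖ := by
                  simp [norm_mul, Complex.norm_real]
              _ = _ := by rw [abs_of_nonneg (hmu_nonneg k m)]
          refine le_trans h1 ?_
          have h2 := ih k m hact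
          have h3 := ih (k + l) (m + l) (Or.inl (by omega))
          have h4 := hlam_le k m h.1 h.2 hact
          have h5 := hmu_le k m h.1 h.2
          have hab1 : ‖f p k m‖ ≥ 0 := norm_nonneg _
          have hab2 : ‖f p (k + l) (m + l)‖ ≥ 0 := norm_nonneg _
          have hlamabs : (0:ℝ) ≤ |lam l Δt k m| := abs_nonneg _
          have key : |lam l Δt k m| * ‖f p k m‖ +
              mu l Δt k m * ‖f p (k + l) (m + l)‖ ≤
              (1 - δ) * (B * r ^ p * ε ^ (k + m)) +
              μb * (B * r ^ p * ε ^ (k + l + (m + l))) := by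
            apply add_le_add
            · apply mul_le_mul h4 h2 hab1 (by linarith)
            · apply mul_le_mul h5 h3 hab2 hμb0.le
          refine le_trans key ?_
          have hpow : ε ^ (k + l + (m + l)) = ε ^ (k + m) * ε ^ (2 * l) := by
            rw [← pow_add]; ring_nf
          rw [hpow]
          have hfin : (1 - δ) + μb * ε ^ (2 * l) ≤ r := by
            rw [hrdef]; linarith
          have hBr : (0:ℝ) ≤ B * r ^ p * ε ^ (k + m) :=
            mul_nonneg (mul_nonneg hB0 (pow_nonneg hr0 _)) (pow_nonneg hε0.le _)
          calc (1 - δ) * (B * r ^ p * ε ^ (k + m)) +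
              μb * (B * r ^ p * (ε ^ (k + m) * ε ^ (2 * l)))
              = ((1 - δ) + μb * ε ^ (2 * l)) * (B * r ^ p * ε ^ (k + m)) := by ring
            _ ≤ r * (B * r ^ p * ε ^ (k + m)) := mul_le_mul_of_nonneg_right hfin hBr
            _ = B * r ^ (p + 1) * ε ^ (k + m) := by ring
        · rw [hf, fEnt, dif_neg h]
          simp only [norm_zero]
          exact mul_nonneg (mul_nonneg hB0 (pow_nonneg hr0 _)) (pow_nonneg hε0.le _)
  -- passive coefficient is 1
  have hlam1 : ∀ k m : ℕ, k < l → m < l → lam l Δt k m = 1 := by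
    intro k m hk hm
    have h1 : cfac l k = 0 := by
      rw [cfac, Nat.descFactorial_eq_zero_iff_lt.2 hk]; simp
    have h2 : cfac l m = 0 := by
      rw [cfac, Nat.descFactorial_eq_zero_iff_lt.2 hm]; simp
    rw [lam, h1, h2]; ring
  -- the feeding sequence
  set g : ℕ → ℕ → ℕ → ℂ := fun k m j => ((mu l Δt k m : ℝ) : ℂ) * f j (k + l) (m + l)
    with hgdef
  have hgnorm : ∀ k m j : ℕ, k ≤ n → m ≤ n → ‖g k m j‖ ≤ (μb * B) * r ^ j := by
    intro k m j hk hm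
    rw [hgdef]
    simp only [norm_mul, Complex.norm_real, Real.norm_eq_abs,
      abs_of_nonneg (hmu_nonneg k m)]
    have h2 : ‖f j (k + l) (m + l)‖ ≤ B * r ^ j * ε ^ (k + l + (m + l)) := by
      exact hEst j (k + l) (m + l) (Or.inl (by omega))
    have h3 : ε ^ (k + l + (m + l)) ≤ 1 := pow_le_one₀ hε0.le hε1
    have h4 : (0:ℝ) ≤ B * r ^ j := mul_nonneg hB0 (pow_nonneg hr0 _)
    calc mu l Δt k m * ‖f j (k + l) (m + l)‖
        ≤ μb * (B * r ^ j * ε ^ (k + l + (m + l))) :=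
          mul_le_mul (hmu_le k m hk hm) h2 (norm_nonneg _) hμb0.le
      _ ≤ μb * (B * r ^ j * 1) := by
          apply mul_le_mul_of_nonneg_left _ hμb0.le
          exact mul_le_mul_of_nonneg_left h3 h4
      _ = (μb * B) * r ^ j := by ring
  have hgsummable : ∀ k m : ℕ, k ≤ n → m ≤ n → Summable (g k m) := by
    intro k m hk hm
    exact Summable.of_norm_bounded
      ((summable_geometric_of_lt_one hr0 hr1).mul_left (μb * B)) (hgnorm k m · hk hm)
  -- the limit matrix
  refine ⟨Matrix.of fun k m : Fin (n+1) =>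
      if (k : ℕ) < l ∧ (m : ℕ) < l then f 0 (k : ℕ) (m : ℕ) + ∑' j, g (k : ℕ) (m : ℕ) j
      else 0, ?_, ?_⟩
  · intro k m hact
    rw [Matrix.of_apply, if_neg (by omega)]
  -- partial sums for passive entries
  have hpart : ∀ k m : ℕ, k < l → m < l → ∀ p : ℕ,
      f p k m = f 0 k m + ∑ j ∈ Finset.range p, g k m j := by
    intro k m hk hm p
    induction p with
    | zero => simp
    | succ p ih =>
        rw [hf, fEnt_rec n l Δt ρ₀ p k m (by omega) (by omega), hlam1 k m hk hm, ← hf,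
          Finset.sum_range_succ, ih]
        push_cast
        ring
  -- tail bound for passive entries
  set T : ℝ := (μb * B) * (1 - r)⁻¹ with hTdef
  have hT0 : 0 ≤ T := by
    apply mul_nonneg (mul_nonneg hμb0.le hB0)
    rw [inv_nonneg]; linarith
  have hTail : ∀ k m : ℕ, k < l → m < l → ∀ p : ℕ,
      ‖f p k m - (f 0 k m + ∑' j, g k m j)‖ ≤ T * r ^ p := by
    intro k m hk hm p
    have hkn : k ≤ n := by omega
    have hmn : m ≤ n := by omega
    have hsummable := hgsummable k m hkn hmn
    have hdiff : f p k m - (f 0 k m + ∑' j, g k m j) = -(∑' j, g k m (j + p)) := by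
      rw [hpart k m hk hm p]
      have hta := Summable.sum_add_tsum_nat_add (f := g k m) p hsummable
      rw [← hta]
      ring
    rw [hdiff, norm_neg]
    have hgeo : Summable (fun j : ℕ => (μb * B * r ^ p) * r ^ j) :=
      (summable_geometric_of_lt_one hr0 hr1).mul_left _
    have hbound : ∀ j : ℕ, ‖g k m (j + p)‖ ≤ (μb * B * r ^ p) * r ^ j := by
      intro j
      have h1 := hgnorm k m (j + p) hkn hmn
      calc ‖g k m (j + p)‖ ≤ (μb * B) * r ^ (j + p) := h1
        _ = (μb * B * r ^ p) * r ^ j := by rw [pow_add]; ring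
    have hS1 : Summable (fun j => ‖g k m (j + p)‖) :=
      Summable.of_nonneg_of_le (fun j => norm_nonneg _) hbound hgeo
    calc ‖∑' j, g k m (j + p)‖ ≤ ∑' j, ‖g k m (j + p)‖ := norm_tsum_le_tsum_norm hS1
      _ ≤ ∑' j : ℕ, (μb * B * r ^ p) * r ^ j := Summable.tsum_le_tsum hbound hS1 hgeo
      _ = (μb * B * r ^ p) * (1 - r)⁻¹ := by
          rw [tsum_mul_left, tsum_geometric_of_lt_one hr0 hr1]
      _ = T * r ^ p := by rw [hTdef]; ring
  -- entrywise bound on the difference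
  set D : ℝ := B + T with hDdef
  have hD0 : 0 ≤ D := by rw [hDdef]; linarith
  have hentry : ∀ p : ℕ, ∀ k m : Fin (n+1),
      ‖((euler n l Δt)^[p] ρ₀ -
        Matrix.of fun k m : Fin (n+1) =>
          if (k : ℕ) < l ∧ (m : ℕ) < l then f 0 (k : ℕ) (m : ℕ) + ∑' j, g (k : ℕ) (m : ℕ) j
          else 0) k m‖ ≤ D * r ^ p := by
    intro p k m
    have hkn : (k : ℕ) ≤ n := by omega
    have hmn : (m : ℕ) ≤ n := by omega
    have hfp : ((euler n l Δt)^[p] ρ₀) k m = f p (k : ℕ) (m : ℕ) := by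
      rw [hf, fEnt, dif_pos ⟨hkn, hmn⟩]
    rw [Matrix.sub_apply, Matrix.of_apply, hfp]
    by_cases hact : l ≤ (k : ℕ) ∨ l ≤ (m : ℕ)
    · rw [if_neg (by omega), sub_zero]
      have h1 := hEst p (k : ℕ) (m : ℕ) hact
      have h2 : ε ^ ((k : ℕ) + (m : ℕ)) ≤ 1 := pow_le_one₀ hε0.le hε1
      have h3 : (0:ℝ) ≤ B * r ^ p := mul_nonneg hB0 (pow_nonneg hr0 _)
      have h4 : (0:ℝ) ≤ r ^ p := pow_nonneg hr0 _
      calc ‖f p (k : ℕ) (m : ℕ)‖ ≤ B * r ^ p * ε ^ ((k : ℕ) + (m : ℕ)) := h1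
        _ ≤ B * r ^ p * 1 := mul_le_mul_of_nonneg_left h2 h3
        _ ≤ D * r ^ p := by rw [hDdef]; have := mul_nonneg hT0 h4; linarith
    · rw [if_pos (by omega)]
      have h1 := hTail (k : ℕ) (m : ℕ) (by omega) (by omega) p
      have h4 : (0:ℝ) ≤ r ^ p := pow_nonneg hr0 _
      calc ‖f p (k : ℕ) (m : ℕ) - (f 0 (k : ℕ) (m : ℕ) + ∑' j, g (k : ℕ) (m : ℕ) j)‖
          ≤ T * r ^ p := h1
        _ ≤ D * r ^ p := by rw [hDdef]; have h5 : (0:ℝ) ≤ B * r ^ p := mul_nonneg hB0 h4; linarith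
  -- assemble the Frobenius-norm bound
  refine ⟨((n : ℝ) + 1) * D, by positivity, r, hr0, hr1, ?_⟩
  intro p
  rw [frobNorm]
  have hsq : ∀ k m : Fin (n+1),
      ‖((euler n l Δt)^[p] ρ₀ -
        Matrix.of fun k m : Fin (n+1) =>
          if (k : ℕ) < l ∧ (m : ℕ) < l then f 0 (k : ℕ) (m : ℕ) + ∑' j, g (k : ℕ) (m : ℕ) j
          else 0) k m‖ ^ 2 ≤ (D * r ^ p) ^ 2 := by
    intro k m
    exact pow_le_pow_left₀ (norm_nonneg _) (hentry p k m) 2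
  have hDr : (0:ℝ) ≤ D * r ^ p := mul_nonneg hD0 (pow_nonneg hr0 _)
  calc Real.sqrt (∑ i, ∑ j, ‖((euler n l Δt)^[p] ρ₀ - _) i j‖ ^ 2)
      ≤ Real.sqrt (∑ _i : Fin (n+1), ∑ _j : Fin (n+1), (D * r ^ p) ^ 2) := by
        apply Real.sqrt_le_sqrt
        apply Finset.sum_le_sum
        intro i _
        apply Finset.sum_le_sum
        intro j _
        exact hsq i j
    _ = Real.sqrt ((((n : ℝ) + 1) * (D * r ^ p)) ^ 2) := by
        simp only [Finset.sum_const, Finset.card_univ, Fintype.card_fin, nsmul_eq_mul]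
        congr 1
        push_cast
        ring
    _ = ((n : ℝ) + 1) * (D * r ^ p) := Real.sqrt_sq (by positivity)
    _ = ((n : ℝ) + 1) * D * r ^ p := by ring
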